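/- The total number of walks of length n with steps E=(1,0), W=(-1,0), NW=(-1,1), SE=(1,-1) confined to the quarter plane equals (2m)!(2m+1)!/(m!^2 (m+1)!^2) if n = 2m, and (2m+1)!(2m+2)!/(m!(m+1)!^2 (m+2)!) if n = 2m+1. -/

import Mathlib

/-- Number of quarter-plane walks of length `n` with steps in `S`, starting at `(0,0)`,
staying in the quarter plane, with arbitrary endpoint. -/
noncomputable def qwalkTotal (S : Set (ℤ × ℤ)) (n : ℕ) : ℕ :=
  Nat.card {w : Fin (n + 1) → ℤ × ℤ //
    w 0 = (0, 0) ∧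
    (∀ i : Fin n, w i.succ - w i.castSucc ∈ S) ∧
    (∀ i, 0 ≤ (w i).1 ∧ 0 ≤ (w i).2)}

/-- binomial c(n,t): number of free ±1 walks of length n ending at t. -/
def cc (n : ℕ) (t : ℤ) : ℕ :=
  if 0 ≤ (n : ℤ) + t ∧ 2 ∣ ((n : ℤ) + t) then n.choose (((n : ℤ) + t) / 2).toNat else 0

lemma cc_zero_of_gt {n : ℕ} {t : ℤ} (h : (n : ℤ) < t) : cc n t = 0 := by
  unfold cc; split_ifs with h1
  · apply Nat.choose_eq_zero_of_lt; omega
  · rfl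

lemma cc_zero_of_lt {n : ℕ} {t : ℤ} (h : t < -(n : ℤ)) : cc n t = 0 := by
  unfold cc; split_ifs with h1
  · omega
  · rfl

lemma cc_zero_of_odd {n : ℕ} {t : ℤ} (h : ¬ (2 ∣ ((n:ℤ) + t))) : cc n t = 0 := by
  unfold cc; split_ifs with h1
  · exact absurd h1.2 h
  · rfl

lemma cc_val {n : ℕ} {t : ℤ} (h1 : 0 ≤ (n : ℤ) + t) (h2 : 2 ∣ ((n:ℤ) + t)) :
    cc n t = n.choose (((n : ℤ) + t) / 2).toNat := by
  unfold cc; rw [if_pos ⟨h1, h2⟩]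

lemma cc_neg (n : ℕ) (t : ℤ) : cc n (-t) = cc n t := by
  by_cases hgt : (n : ℤ) < t
  · rw [cc_zero_of_gt hgt, cc_zero_of_lt (by omega : -t < -(n:ℤ))]
  by_cases hlt : t < -(n:ℤ)
  · rw [cc_zero_of_lt hlt, cc_zero_of_gt (by omega : (n:ℤ) < -t)]
  by_cases hpar : 2 ∣ ((n:ℤ) + t)
  · rcases hpar with ⟨k, hk⟩
    rw [cc_val (by omega) ⟨k, hk⟩, cc_val (by omega) ⟨n - k, by omega⟩]
    have hle : (((n:ℤ) + t) / 2).toNat ≤ n := by omega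
    have heq : (((n:ℤ) + -t)/2).toNat = n - (((n:ℤ) + t)/2).toNat := by omega
    rw [heq, Nat.choose_symm hle]
  · rw [cc_zero_of_odd hpar, cc_zero_of_odd (by omega)]

lemma cc_succ (n : ℕ) (t : ℤ) : cc (n + 1) t = cc n (t - 1) + cc n (t + 1) := by
  by_cases hpar : 2 ∣ ((n:ℤ) + 1 + t)
  · rcases hpar with ⟨k, hk⟩
    by_cases hneg : (n:ℤ) + 1 + t < 0
    · rw [cc_zero_of_lt (by push_cast; omega), cc_zero_of_lt (by omega),
        cc_zero_of_lt (by omega)]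
    by_cases h0 : (n:ℤ) + 1 + t = 0
    · rw [cc_val (by push_cast; omega) (by push_cast; omega),
        cc_zero_of_lt (by omega), cc_val (by omega) ⟨k, by omega⟩]
      have e1 : (((n:ℤ) + 1 + t) / 2).toNat = 0 := by omega
      have e2 : (((n:ℤ) + (t + 1)) / 2).toNat = 0 := by omega
      push_cast [e1]
      rw [e2]
      simp
    · -- n+1+t ≥ 2, even
      rw [cc_val (by push_cast; omega) (by push_cast; exact ⟨k, by omega⟩),
        cc_val (by omega) ⟨k - 1, by omega⟩, cc_val (by omega) ⟨k, by omega⟩]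
      have e1 : (((n:ℤ) + 1 + t) / 2).toNat = k.toNat := by omega
      have e2 : (((n:ℤ) + (t - 1)) / 2).toNat = k.toNat - 1 := by omega
      have e3 : (((n:ℤ) + (t + 1)) / 2).toNat = k.toNat := by omega
      have hk1 : 1 ≤ k.toNat := by omega
      push_cast [e1]
      rw [e2, e3]
      obtain ⟨a, hA⟩ : ∃ a, k.toNat = a + 1 := ⟨k.toNat - 1, by omega⟩
      rw [hA]
      simp [Nat.choose_succ_succ']
  · rw [cc_zero_of_odd (by push_cast; omega), cc_zero_of_odd (by omega),
      cc_zero_of_odd (by omega)]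

def AA (n : ℕ) (t : ℤ) : ℤ := (cc n (t - 3) : ℤ) - cc n (t + 3)
def BB (n : ℕ) (t : ℤ) : ℤ := (cc n (t - 1) : ℤ) - cc n (t + 1)

/-- closed form for the number of quarter-plane walks from (0,0) to (x,y). -/
def FF (n : ℕ) (x y : ℤ) : ℤ := AA n (x + 2*y + 3) * BB n (x + 1) - BB n (x + 2*y + 3) * AA n (x + 1)

/-- recursive count of quarter plane walks from (0,0) to p. -/
def wg : ℕ → ℤ × ℤ → ℕ
  | 0, p => if p = (0, 0) then 1 else 0
  | n+1, p => if 0 ≤ p.1 ∧ 0 ≤ p.2 then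
      wg n (p.1 - 1, p.2) + wg n (p.1 + 1, p.2) + wg n (p.1 + 1, p.2 - 1) + wg n (p.1 - 1, p.2 + 1)
    else 0

lemma cc_zero_n (t : ℤ) : cc 0 t = if t = 0 then 1 else 0 := by
  unfold cc
  split_ifs with h1 h2 h2
  · subst h2; rfl
  · push_cast at h1
    rcases h1 with ⟨h3, k, hk⟩
    push_cast
    have : ((0 + t)/2).toNat = k.toNat := by omega
    rw [this]
    apply Nat.choose_eq_zero_of_lt; omega
  · exfalso; exact h1 (by subst h2; exact ⟨by simp, ⟨0, by simp⟩⟩)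
  · rfl

lemma AA_succ (n : ℕ) (t : ℤ) : AA (n+1) t = AA n (t - 1) + AA n (t + 1) := by
  unfold AA
  rw [cc_succ, cc_succ]
  push_cast
  ring_nf

lemma BB_succ (n : ℕ) (t : ℤ) : BB (n+1) t = BB n (t - 1) + BB n (t + 1) := by
  unfold BB
  rw [cc_succ, cc_succ]
  push_cast
  ring_nf

lemma FF_succ (n : ℕ) (x y : ℤ) :
    FF (n+1) x y = FF n (x-1) y + FF n (x+1) y + FF n (x+1) (y-1) + FF n (x-1) (y+1) := by
  unfold FF
  rw [AA_succ, BB_succ, AA_succ, BB_succ]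
  rw [show x + 2*y + 3 - 1 = (x-1) + 2*y + 3 by ring, show x + 2*y + 3 + 1 = (x+1) + 2*y + 3 by ring,
    show x + 1 - 1 = (x-1) + 1 by ring, show x + 1 + 1 = (x+1) + 1 by ring,
    show (x+1) + 2*(y-1) + 3 = (x-1) + 2*y + 3 by ring,
    show (x-1) + 2*(y+1) + 3 = (x+1) + 2*y + 3 by ring]
  ring

lemma FF_left (n : ℕ) (y : ℤ) : FF n (-1) y = 0 := by
  have h1 : BB n 0 = 0 := by
    unfold BB; rw [show (0:ℤ) - 1 = -1 by ring, show (0:ℤ)+1 = 1 by ring, cc_neg n 1]; ring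
  have h2 : AA n 0 = 0 := by
    unfold AA; rw [show (0:ℤ) - 3 = -3 by ring, show (0:ℤ)+3 = 3 by ring, cc_neg n 3]; ring
  unfold FF
  rw [show (-1:ℤ) + 1 = 0 by ring, h1, h2]
  ring

lemma FF_bottom (n : ℕ) (x : ℤ) : FF n (x+1) (-1) = 0 := by
  unfold FF
  rw [show (x+1) + 2*(-1) + 3 = (x+1) + 1 by ring]
  ring

lemma wg_out (n : ℕ) (p : ℤ × ℤ) (h : ¬ (0 ≤ p.1 ∧ 0 ≤ p.2)) : wg n p = 0 := by
  cases n with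
  | zero =>
    simp only [wg]
    rw [if_neg]
    intro hc
    subst hc
    exact h ⟨le_refl 0, le_refl 0⟩
  | succ m =>
    simp only [wg]
    rw [if_neg h]

lemma AA0 (t : ℤ) : AA 0 t = (if t = 3 then 1 else 0) - (if t = -3 then 1 else 0) := by
  unfold AA; rw [cc_zero_n, cc_zero_n]
  split_ifs <;> push_cast <;> omega

lemma BB0 (t : ℤ) : BB 0 t = (if t = 1 then 1 else 0) - (if t = -1 then 1 else 0) := by
  unfold BB; rw [cc_zero_n, cc_zero_n]
  split_ifs <;> push_cast <;> omega

lemma wg_eq_FF : ∀ (n : ℕ) (x y : ℤ), 0 ≤ x → 0 ≤ y → (wg n (x, y) : ℤ) = FF n x y := by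
  intro n
  induction n with
  | zero =>
    intro x y hx hy
    simp only [wg]
    unfold FF
    rw [AA0, BB0, AA0, BB0]
    by_cases hxy : ((x:ℤ), y) = ((0:ℤ), 0)
    · rw [if_pos hxy]
      rw [Prod.mk.injEq] at hxy
      obtain ⟨h1, h2⟩ := hxy
      subst h1; subst h2
      norm_num
    · rw [if_neg hxy]
      have hne : ¬ (x = 0 ∧ y = 0) := by
        intro ⟨h1, h2⟩; exact hxy (by rw [h1, h2])
      split_ifs <;> push_cast <;> omega
  | succ n ih =>
    intro x y hx hy
    have hrec : wg (n+1) (x, y) = wg n (x - 1, y) + wg n (x + 1, y) + wg n (x + 1, y - 1) + wg n (x - 1, y + 1) := by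
      simp only [wg]
      rw [if_pos ⟨hx, hy⟩]
    rw [hrec, FF_succ]
    have e1 : (wg n (x - 1, y) : ℤ) = FF n (x-1) y := by
      by_cases h : 0 ≤ x - 1
      · exact ih _ _ h hy
      · have hx1 : x - 1 = -1 := by omega
        rw [hx1, FF_left, wg_out n _ (by intro hq; exact absurd hq.1 (by norm_num))]
        rfl
    have e2 : (wg n (x + 1, y) : ℤ) = FF n (x+1) y := ih _ _ (by omega) hy
    have e3 : (wg n (x + 1, y - 1) : ℤ) = FF n (x+1) (y-1) := by
      by_cases h : 0 ≤ y - 1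
      · exact ih _ _ (by omega) h
      · have hy1 : y - 1 = -1 := by omega
        rw [hy1, FF_bottom, wg_out n _ (by intro hq; exact absurd hq.2 (by norm_num))]
        rfl
    have e4 : (wg n (x - 1, y + 1) : ℤ) = FF n (x-1) (y+1) := by
      by_cases h : 0 ≤ x - 1
      · exact ih _ _ h (by omega)
      · have hx1 : x - 1 = -1 := by omega
        rw [hx1, FF_left, wg_out n _ (by intro hq; exact absurd hq.1 (by norm_num))]
        rfl
    push_cast
    rw [e1, e2, e3, e4]

lemma sum_shift (g : ℕ → ℤ) (k : ℕ) :
    ∑ j ∈ Finset.range k, g (j+1) = ∑ j ∈ Finset.range k, g j + g k - g 0 := by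
  have h1 := Finset.sum_range_succ' g k
  have h2 := Finset.sum_range_succ g k
  rw [h2] at h1
  linarith

lemma tele (f : ℕ → ℤ) (k : ℕ) : ∀ N, ∑ x ∈ Finset.range N, (f x - f (x+k)) =
    ∑ j ∈ Finset.range k, f j - ∑ j ∈ Finset.range k, f (N+j) := by
  intro N
  induction N with
  | zero => simp
  | succ N ih =>
    rw [Finset.sum_range_succ, ih]
    have hs : ∑ j ∈ Finset.range k, f (N+1+j) = ∑ j ∈ Finset.range k, f (N+j) + f (N+k) - f (N+0) := by
      have h := sum_shift (fun j => f (N+j)) k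
      calc ∑ j ∈ Finset.range k, f (N+1+j) = ∑ j ∈ Finset.range k, f (N+(j+1)) := by
            exact Finset.sum_congr rfl (fun j _ => by congr 1; omega)
        _ = ∑ j ∈ Finset.range k, f (N+j) + f (N+k) - f (N+0) := by rw [h]
    rw [hs]
    simp only [Nat.add_zero]
    ring

lemma cc_big {n : ℕ} {t : ℤ} (h : (n:ℤ) < t) : (cc n t : ℤ) = 0 := by rw [cc_zero_of_gt h]; rfl

lemma row_sum (n : ℕ) (x : ℤ) (hx : 0 ≤ x) :
    ∑ y ∈ Finset.range (n+1), FF n x (y:ℤ) =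
      ((cc n x : ℤ) + cc n (x+2) + cc n (x+4)) * ((cc n x : ℤ) - cc n (x+2))
        - (cc n (x+2) : ℤ) * ((cc n (x-2) : ℤ) - cc n (x+4)) := by
  have hsplit : ∀ y : ℕ, FF n x (y:ℤ) =
      ((fun j : ℕ => (cc n (x + 2*j) : ℤ)) y - (fun j : ℕ => (cc n (x + 2*j) : ℤ)) (y+3)) * BB n (x+1)
      - ((fun j : ℕ => (cc n (x + 2*j + 2) : ℤ)) y - (fun j : ℕ => (cc n (x + 2*j + 2) : ℤ)) (y+1)) * AA n (x+1) := by
    intro y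
    unfold FF AA BB
    simp only []
    push_cast
    rw [show x + 2*(y:ℤ) + 3 - 3 = x + 2*y by ring, show x + 2*(y:ℤ) + 3 + 3 = x + 2*((y:ℤ)+3) by ring,
      show x + 2*(y:ℤ) + 3 - 1 = x + 2*(y:ℤ) + 2 by ring, show x + 2*(y:ℤ) + 3 + 1 = x + 2*((y:ℤ)+1) + 2 by ring]
  rw [Finset.sum_congr rfl (fun y _ => hsplit y)]
  rw [Finset.sum_sub_distrib, ← Finset.sum_mul, ← Finset.sum_mul]
  rw [tele (fun j : ℕ => (cc n (x + 2*j) : ℤ)) 3 (n+1), tele (fun j : ℕ => (cc n (x + 2*j + 2) : ℤ)) 1 (n+1)]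
  simp only [Finset.sum_range_succ, Finset.sum_range_zero]
  push_cast
  rw [cc_big (t := x + 2*((n:ℤ)+1+0)) (by omega), cc_big (t := x + 2*((n:ℤ)+1+1)) (by omega),
    cc_big (t := x + 2*((n:ℤ)+1+2)) (by omega), cc_big (t := x + 2*((n:ℤ)+1+0) + 2) (by omega)]
  rw [show x + (0:ℤ) = x by ring]
  try rw [show x + (0:ℤ) + 2 = x + 2 by ring]
  unfold AA BB
  push_cast
  ring

lemma total_sum (n : ℕ) :
    ∑ x ∈ Finset.range (n+1), ∑ y ∈ Finset.range (n+1), FF n (x:ℤ) (y:ℤ) =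
      (cc n 0 : ℤ)^2 + (cc n 1 : ℤ)^2 - (cc n 2 : ℤ)^2 - (cc n 1 : ℤ) * (cc n 3 : ℤ) := by
  have hrow : ∀ x : ℕ, ∑ y ∈ Finset.range (n+1), FF n (x:ℤ) (y:ℤ) =
      ((fun j : ℕ => ((cc n (j:ℤ) : ℤ))^2) x - (fun j : ℕ => ((cc n (j:ℤ) : ℤ))^2) (x+2))
      - ((fun j : ℕ => (cc n ((j:ℤ)-2) : ℤ) * (cc n ((j:ℤ)+2) : ℤ)) x
         - (fun j : ℕ => (cc n ((j:ℤ)-2) : ℤ) * (cc n ((j:ℤ)+2) : ℤ)) (x+2)) := by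
    intro x
    rw [row_sum n (x:ℤ) (by positivity)]
    simp only []
    push_cast
    rw [show ((x:ℤ)+2)-2 = (x:ℤ) by ring, show ((x:ℤ)+2)+2 = (x:ℤ)+4 by ring]
    ring
  rw [Finset.sum_congr rfl (fun x _ => hrow x)]
  rw [Finset.sum_sub_distrib]
  rw [tele (fun j : ℕ => ((cc n (j:ℤ) : ℤ))^2) 2 (n+1),
    tele (fun j : ℕ => (cc n ((j:ℤ)-2) : ℤ) * (cc n ((j:ℤ)+2) : ℤ)) 2 (n+1)]
  simp only [Finset.sum_range_succ, Finset.sum_range_zero]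
  push_cast
  rw [cc_big (t := ((n:ℤ)+1+0)) (by omega), cc_big (t := ((n:ℤ)+1+1)) (by omega),
    cc_big (t := ((n:ℤ)+1+0+2)) (by omega), cc_big (t := ((n:ℤ)+1+1+2)) (by omega)]
  rw [cc_neg n 2, cc_neg n 1]
  ring

def Sq : Set (ℤ × ℤ) := {(1, 0), (-1, 0), (-1, 1), (1, -1)}

def Sfin : Finset (ℤ × ℤ) := {(1, 0), (-1, 0), (-1, 1), (1, -1)}

lemma mem_Sq_iff (s : ℤ × ℤ) : s ∈ Sq ↔ s ∈ Sfin := by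
  simp [Sq, Sfin]

/-- walks of length n from (0,0) to p staying in the quarter plane -/
def WT (n : ℕ) (p : ℤ × ℤ) : Type :=
  {w : Fin (n + 1) → ℤ × ℤ //
    w 0 = (0, 0) ∧
    (∀ i : Fin n, w i.succ - w i.castSucc ∈ Sq) ∧
    (∀ i, 0 ≤ (w i).1 ∧ 0 ≤ (w i).2) ∧
    w (Fin.last n) = p}

lemma WT_zero (p : ℤ × ℤ) : Nat.card (WT 0 p) = wg 0 p ∧ Finite (WT 0 p) := by
  by_cases hp : p = (0, 0)
  · subst hp
    have : Unique (WT 0 (0, 0)) := {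
      default := ⟨fun _ => (0, 0), rfl, fun i => i.elim0, fun _ => ⟨le_refl 0, le_refl 0⟩, rfl⟩
      uniq := by
        rintro ⟨w, h0, _, _, _⟩
        apply Subtype.ext
        funext i
        have hi : i = 0 := Fin.ext (by omega)
        show w i = (0, 0)
        rw [hi]
        exact h0
    }
    constructor
    · rw [Nat.card_unique]
      simp [wg]
    · infer_instance
  · have : IsEmpty (WT 0 p) := by
      constructor
      rintro ⟨w, h0, _, _, hl⟩
      apply hp
      rw [← hl]
      have : Fin.last 0 = 0 := rfl
      rw [this, h0]
    constructor
    · rw [Nat.card_of_isEmpty]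
      simp only [wg]
      rw [if_neg hp]
    · infer_instance

/-- extension map -/
def stepFun (n : ℕ) (p : ℤ × ℤ) (hp : 0 ≤ p.1 ∧ 0 ≤ p.2) :
    (Σ s : ↥Sfin, WT n (p - s.1)) → WT (n + 1) p := fun ⟨⟨s, hs⟩, ⟨w, h0, hstep, hq, hlast⟩⟩ =>
  ⟨Fin.snoc w p, by
    rw [show (0 : Fin (n+2)) = Fin.castSucc 0 from (Fin.castSucc_zero).symm, Fin.snoc_castSucc]
    exact h0, by
    intro i
    induction i using Fin.lastCases with
    | last =>
      rw [Fin.succ_last, Fin.snoc_last, Fin.snoc_castSucc, hlast]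
      rw [mem_Sq_iff]
      have : p - (p - s) = s := by ring
      rw [this]
      exact hs
    | cast j =>
      rw [Fin.succ_castSucc, Fin.snoc_castSucc, Fin.snoc_castSucc]
      exact hstep j, by
    intro i
    induction i using Fin.lastCases with
    | last => rw [Fin.snoc_last]; exact hp
    | cast j => rw [Fin.snoc_castSucc]; exact hq j, by
    rw [Fin.snoc_last]⟩

lemma stepFun_bij (n : ℕ) (p : ℤ × ℤ) (hp : 0 ≤ p.1 ∧ 0 ≤ p.2) :
    Function.Bijective (stepFun n p hp) := by
  constructor
  · rintro ⟨⟨s, hs⟩, ⟨w, h0, hstep, hq, hlast⟩⟩ ⟨⟨t, ht⟩, ⟨u, k0, kstep, kq, klast⟩⟩ h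
    have hw := congrArg Subtype.val h
    simp only [stepFun] at hw
    have hwu : w = u := by
      have h5 := congrArg Fin.init hw
      rwa [Fin.init_snoc, Fin.init_snoc] at h5
    subst hwu
    have hst : s = t := by
      rw [hlast] at klast
      have : p - s = p - t := klast
      have h2 := congrArg Prod.fst this
      have h3 := congrArg Prod.snd this
      simp only [Prod.fst_sub, Prod.snd_sub] at h2 h3
      ext
      · omega
      · omega
    subst hst
    rfl
  · rintro ⟨w, h0, hstep, hq, hlast⟩
    set s := w (Fin.last (n+1)) - w ((Fin.last n).castSucc) with hs_def
    have hs : s ∈ Sfin := by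
      rw [← mem_Sq_iff]
      have := hstep (Fin.last n)
      rwa [Fin.succ_last] at this
    have hinit_last : Fin.init w (Fin.last n) = p - s := by
      show w ((Fin.last n).castSucc) = p - s
      rw [hs_def, hlast]
      ring
    refine ⟨⟨⟨s, hs⟩, ⟨Fin.init w, ?_, ?_, ?_, hinit_last⟩⟩, ?_⟩
    · show w ((0 : Fin (n+1)).castSucc) = (0, 0)
      rw [Fin.castSucc_zero]
      exact h0
    · intro j
      have h6 := hstep j.castSucc
      show w (j.succ.castSucc) - w (j.castSucc.castSucc) ∈ Sq
      rwa [Fin.succ_castSucc] at h6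
    · intro i
      exact hq i.castSucc
    · apply Subtype.ext
      simp only [stepFun]
      rw [← hlast]
      exact Fin.snoc_init_self w

lemma WT_card : ∀ (n : ℕ) (p : ℤ × ℤ), Nat.card (WT n p) = wg n p ∧ Finite (WT n p) := by
  intro n
  induction n with
  | zero => exact WT_zero
  | succ n ih =>
    intro p
    by_cases hp : 0 ≤ p.1 ∧ 0 ≤ p.2
    · have hfin : ∀ s : ↥Sfin, Finite (WT n (p - s.1)) := fun s => (ih _).2
      haveI := hfin
      haveI : ∀ s : ↥Sfin, Fintype (WT n (p - s.1)) := fun s => Fintype.ofFinite _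
      have hsig : Finite (Σ s : ↥Sfin, WT n (p - s.1)) := inferInstance
      have hbij := stepFun_bij n p hp
      have hfinW : Finite (WT (n+1) p) := Finite.of_surjective _ hbij.2
      refine ⟨?_, hfinW⟩
      have hcard : Nat.card (Σ s : ↥Sfin, WT n (p - s.1)) = Nat.card (WT (n+1) p) :=
        Nat.card_eq_of_bijective _ hbij
      rw [← hcard]
      rw [Nat.card_eq_fintype_card, Fintype.card_sigma]
      have : ∀ s : ↥Sfin, Fintype.card (WT n (p - s.1)) = wg n (p - s.1) := by
        intro s
        rw [← Nat.card_eq_fintype_card]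
        exact (ih _).1
      rw [Finset.sum_congr rfl (fun s _ => this s)]
      rw [Finset.sum_coe_sort Sfin (fun s => wg n (p - s))]
      show ∑ s ∈ Sfin, wg n (p - s) = wg (n+1) p
      have e1 : p - ((1:ℤ), (0:ℤ)) = (p.1 - 1, p.2) := by ext <;> simp
      have e2 : p - ((-1:ℤ), (0:ℤ)) = (p.1 + 1, p.2) := by ext <;> simp <;> ring
      have e3 : p - ((-1:ℤ), (1:ℤ)) = (p.1 + 1, p.2 - 1) := by ext <;> simp <;> ring
      have e4 : p - ((1:ℤ), (-1:ℤ)) = (p.1 - 1, p.2 + 1) := by ext <;> simp <;> ring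
      rw [show Sfin = {((1:ℤ),(0:ℤ)), (-1,0), (-1,1), (1,-1)} from rfl]
      rw [Finset.sum_insert (by decide), Finset.sum_insert (by decide),
        Finset.sum_insert (by decide), Finset.sum_singleton]
      rw [e1, e2, e3, e4]
      simp only [wg]
      rw [if_pos hp]
      ring
    · have : IsEmpty (WT (n+1) p) := by
        constructor
        rintro ⟨w, h0, _, hq, hl⟩
        rw [← hl] at hp
        exact hp (hq _)
      constructor
      · rw [Nat.card_of_isEmpty]
        simp only [wg]
        rw [if_neg hp]
      · infer_instance

lemma wbnd {n : ℕ} (w : Fin (n+1) → ℤ × ℤ) (h0 : w 0 = (0, 0))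
    (hstep : ∀ i : Fin n, w i.succ - w i.castSucc ∈ Sq) :
    ∀ i : Fin (n+1), (w i).1 ≤ (i : ℕ) ∧ (w i).2 ≤ (i : ℕ) := by
  intro i
  induction i using Fin.induction with
  | zero => rw [h0]; simp
  | succ j ihj =>
    have hs := hstep j
    simp only [Sq, Set.mem_insert_iff, Set.mem_singleton_iff, Prod.ext_iff, Prod.fst_sub,
      Prod.snd_sub] at hs
    simp only [Fin.val_succ, Fin.coe_castSucc] at ihj ⊢
    rcases hs with ⟨h1, h2⟩ | ⟨h1, h2⟩ | ⟨h1, h2⟩ | ⟨h1, h2⟩ <;> omega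

def Wk (n : ℕ) : Type :=
  {w : Fin (n + 1) → ℤ × ℤ //
    w 0 = (0, 0) ∧
    (∀ i : Fin n, w i.succ - w i.castSucc ∈ Sq) ∧
    (∀ i, 0 ≤ (w i).1 ∧ 0 ≤ (w i).2)}

noncomputable def boxE (n : ℕ) : Finset (ℤ × ℤ) := Finset.Icc ((0:ℤ), (0:ℤ)) ((n:ℤ), (n:ℤ))

def forgetEnd (n : ℕ) : (Σ p : ↥(boxE n), WT n p.1) → Wk n :=
  fun ⟨_, ⟨w, h0, hstep, hq, _⟩⟩ => ⟨w, h0, hstep, hq⟩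

lemma forgetEnd_bij (n : ℕ) : Function.Bijective (forgetEnd n) := by
  constructor
  · rintro ⟨⟨p, hp⟩, ⟨w, h0, hstep, hq, hl⟩⟩ ⟨⟨q, hq'⟩, ⟨u, k0, kstep, kq, kl⟩⟩ h
    have hw := congrArg Subtype.val h
    simp only [forgetEnd] at hw
    have hwu : w = u := hw
    subst hwu
    have hl' : w (Fin.last n) = p := hl
    have kl' : w (Fin.last n) = q := kl
    have hpq : p = q := by rw [← hl', kl']
    subst hpq
    rfl
  · rintro ⟨w, h0, hstep, hq⟩
    have hmem : w (Fin.last n) ∈ boxE n := by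
      rw [boxE, Finset.mem_Icc]
      constructor
      · rw [Prod.le_def]
        exact ⟨(hq _).1, (hq _).2⟩
      · rw [Prod.le_def]
        have := wbnd w h0 hstep (Fin.last n)
        rw [Fin.val_last] at this
        exact this
    exact ⟨⟨⟨w (Fin.last n), hmem⟩, ⟨w, h0, hstep, hq, rfl⟩⟩, rfl⟩

lemma card_walks (n : ℕ) : Nat.card (Wk n) = ∑ p ∈ boxE n, wg n p := by
  haveI : ∀ p : ↥(boxE n), Finite (WT n p.1) := fun p => (WT_card n p.1).2
  haveI : ∀ p : ↥(boxE n), Fintype (WT n p.1) := fun p => Fintype.ofFinite _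
  rw [← Nat.card_eq_of_bijective _ (forgetEnd_bij n)]
  rw [Nat.card_eq_fintype_card, Fintype.card_sigma]
  have : ∀ p : ↥(boxE n), Fintype.card (WT n p.1) = wg n p.1 := by
    intro p
    rw [← Nat.card_eq_fintype_card]
    exact (WT_card n p.1).1
  rw [Finset.sum_congr rfl (fun p _ => this p)]
  exact Finset.sum_coe_sort (boxE n) (wg n)

lemma Icc_int_eq (n : ℕ) :
    Finset.Icc (0:ℤ) (n:ℤ) = (Finset.range (n+1)).map ⟨Nat.cast, Nat.cast_injective⟩ := by
  ext a
  simp only [Finset.mem_Icc, Finset.mem_map, Finset.mem_range, Function.Embedding.coeFn_mk]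
  constructor
  · rintro ⟨h1, h2⟩
    exact ⟨a.toNat, by omega, by omega⟩
  · rintro ⟨b, hb, rfl⟩
    omega

lemma total_value (n : ℕ) :
    ((∑ p ∈ boxE n, wg n p : ℕ) : ℤ) =
      (cc n 0 : ℤ)^2 + (cc n 1 : ℤ)^2 - (cc n 2 : ℤ)^2 - (cc n 1 : ℤ) * (cc n 3 : ℤ) := by
  rw [boxE, Finset.Icc_prod_def]
  push_cast
  rw [Finset.sum_product]
  rw [Icc_int_eq]
  simp only [Finset.sum_map, Function.Embedding.coeFn_mk]
  rw [← total_sum n]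
  apply Finset.sum_congr rfl
  intro x _
  apply Finset.sum_congr rfl
  intro y _
  exact wg_eq_FF n x y (by positivity) (by positivity)


lemma choose_cast_q {n k : ℕ} (h : k ≤ n) :
    ((n.choose k : ℚ)) = (n.factorial : ℚ) / (k.factorial * (n - k).factorial) := by
  rw [Nat.cast_choose ℚ h]

lemma qwalk_closed (n : ℕ) :
    ((qwalkTotal {(1, 0), (-1, 0), (-1, 1), (1, -1)} n : ℕ) : ℤ) =
      (cc n 0 : ℤ)^2 + (cc n 1 : ℤ)^2 - (cc n 2 : ℤ)^2 - (cc n 1 : ℤ) * (cc n 3 : ℤ) := by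
  have h1 : qwalkTotal {(1, 0), (-1, 0), (-1, 1), (1, -1)} n = Nat.card (Wk n) := rfl
  rw [h1, card_walks]
  exact total_value n

theorem walks_EWNWSE_total (m : ℕ) :
    qwalkTotal {(1, 0), (-1, 0), (-1, 1), (1, -1)} (2 * m) *
        (Nat.factorial m ^ 2 * Nat.factorial (m + 1) ^ 2) =
      Nat.factorial (2 * m) * Nat.factorial (2 * m + 1) ∧
    qwalkTotal {(1, 0), (-1, 0), (-1, 1), (1, -1)} (2 * m + 1) *
        (Nat.factorial m * Nat.factorial (m + 1) ^ 2 * Nat.factorial (m + 2)) =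
      Nat.factorial (2 * m + 1) * Nat.factorial (2 * m + 2) := by
  constructor
  · -- even case
    have hc1 : cc (2*m) 1 = 0 := cc_zero_of_odd (by push_cast; omega)
    have hc3 : cc (2*m) 3 = 0 := cc_zero_of_odd (by push_cast; omega)
    have hc0 : cc (2*m) 0 = (2*m).choose m := by
      rw [cc_val (by push_cast; omega) (by push_cast; omega)]
      congr 1
      push_cast
      omega
    have hc2 : cc (2*m) 2 = (2*m).choose (m+1) := by
      rw [cc_val (by push_cast; omega) (by push_cast; omega)]
      congr 1
      push_cast
      omega
    have hT := qwalk_closed (2*m)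
    rw [hc0, hc1, hc2, hc3] at hT
    push_cast at hT
    rcases Nat.eq_zero_or_pos m with hm | hm
    · subst hm
      norm_num at hT
      norm_num [Nat.factorial, hT]
    · -- m ≥ 1
      have hTQ := congrArg (fun z : ℤ => (z : ℚ)) hT
      push_cast at hTQ
      apply Nat.cast_injective (R := ℚ)
      push_cast
      rw [hTQ]
      rw [choose_cast_q (by omega : m ≤ 2*m), choose_cast_q (by omega : m + 1 ≤ 2*m)]
      rw [show 2*m - m = m by omega, show 2*m - (m+1) = m - 1 by omega]
      have f1 : m.factorial = m * (m-1).factorial := by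
        conv_lhs => rw [show m = (m-1) + 1 by omega]
        rw [Nat.factorial_succ]
        congr 1
        omega
      have f3 : (2*m+1).factorial = (2*m+1) * (2*m).factorial := Nat.factorial_succ _
      rw [Nat.factorial_succ m, f3, f1]
      have hb : ((m-1).factorial : ℚ) ≠ 0 := by positivity
      have hm' : (m : ℚ) ≠ 0 := by
        simp only [ne_eq, Nat.cast_eq_zero]
        omega
      have hm1 : ((m : ℚ) + 1) ≠ 0 := by positivity
      push_cast
      field_simp
      ring
  · -- odd case
    have hc0 : cc (2*m+1) 0 = 0 := cc_zero_of_odd (by push_cast; omega)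
    have hc2 : cc (2*m+1) 2 = 0 := cc_zero_of_odd (by push_cast; omega)
    have hc1 : cc (2*m+1) 1 = (2*m+1).choose (m+1) := by
      rw [cc_val (by push_cast; omega) (by push_cast; omega)]
      congr 1
      push_cast
      omega
    have hc3 : cc (2*m+1) 3 = (2*m+1).choose (m+2) := by
      rw [cc_val (by push_cast; omega) (by push_cast; omega)]
      congr 1
      push_cast
      omega
    have hT := qwalk_closed (2*m+1)
    rw [hc0, hc1, hc2, hc3] at hT
    push_cast at hT
    rcases Nat.eq_zero_or_pos m with hm | hm
    · subst hm
      norm_num at hT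
      norm_num [Nat.factorial, hT]
    · have hTQ := congrArg (fun z : ℤ => (z : ℚ)) hT
      push_cast at hTQ
      apply Nat.cast_injective (R := ℚ)
      push_cast
      rw [hTQ]
      rw [choose_cast_q (by omega : m + 1 ≤ 2*m+1), choose_cast_q (by omega : m + 2 ≤ 2*m+1)]
      rw [show 2*m+1 - (m+1) = m by omega, show 2*m+1 - (m+2) = m - 1 by omega]
      have f1 : m.factorial = m * (m-1).factorial := by
        conv_lhs => rw [show m = (m-1) + 1 by omega]
        rw [Nat.factorial_succ]
        congr 1
        omega
      have f4 : (2*m+2).factorial = (2*m+2) * (2*m+1).factorial := Nat.factorial_succ _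
      rw [Nat.factorial_succ (m+1), Nat.factorial_succ m, f4, f1]
      have hb : ((m-1).factorial : ℚ) ≠ 0 := by positivity
      have hm' : (m : ℚ) ≠ 0 := by
        simp only [ne_eq, Nat.cast_eq_zero]
        omega
      have hm1 : ((m : ℚ) + 1) ≠ 0 := by positivity
      have hm2 : ((m : ℚ) + 2) ≠ 0 := by positivity
      push_cast
      field_simp
      ring
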